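/- arXiv:1301.5584 — 2 statements merged into one kernel-verified Lean document; each statement's English description precedes it below -/
import Mathlib

section
/- Assume n ≥ 2. There exists a nonzero nonnegative function f : V → ℝ such that R(f) ≤ λ₂, vol(supp(f)) ≤ vol(V)/2, and ‖f‖_w = 1. -/
open scoped Classical

namespace CheegerHigher

noncomputable section

variable {n : ℕ}

/-- Weighted degree of a vertex: `w(v) = ∑_u w(v,u)`. -/
def deg (w : Fin n → Fin n → ℝ) (v : Fin n) : ℝ := ∑ u, w v u

/-- Volume of a vertex set. -/
def vol (w : Fin n → Fin n → ℝ) (S : Finset (Fin n)) : ℝ := ∑ v ∈ S, deg w v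

/-- Total weight of (ordered) pairs from `S` to `T`; for disjoint `S`, `T` this is `w(E(S,T))`. -/
def cutWeight (w : Fin n → Fin n → ℝ) (S T : Finset (Fin n)) : ℝ :=
  ∑ u ∈ S, ∑ v ∈ T, w u v

/-- Total edge weight `w(E)` (each unordered edge counted once). -/
def totalWeight (w : Fin n → Fin n → ℝ) : ℝ := (1 / 2 : ℝ) * ∑ u, ∑ v, w u v

/-- Conductance of a set `S`. -/
noncomputable def conductance (w : Fin n → Fin n → ℝ) (S : Finset (Fin n)) : ℝ :=
  cutWeight w S Sᶜ / min (vol w S) (vol w Sᶜ)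

/-- Conductance of the graph: minimum over nonempty proper subsets. -/
noncomputable def minConductance (w : Fin n → Fin n → ℝ) : ℝ :=
  sInf { x | ∃ S : Finset (Fin n), S.Nonempty ∧ S ≠ Finset.univ ∧ x = conductance w S }

/-- `k`-way expansion: min over `k` pairwise disjoint nonempty subsets of the max conductance. -/
noncomputable def multiwayExpansion (w : Fin n → Fin n → ℝ) (k : ℕ) : ℝ :=
  sInf { x | ∃ S : Fin k → Finset (Fin n), (∀ i, (S i).Nonempty) ∧
      (∀ i j, i ≠ j → Disjoint (S i) (S j)) ∧ x = ⨆ i, conductance w (S i) }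

/-- `‖f‖_w²  = ∑_v w(v) f(v)²`. -/
def normWsq (w : Fin n → Fin n → ℝ) (f : Fin n → ℝ) : ℝ := ∑ v, deg w v * f v ^ 2

/-- Dirichlet energy `∑_{{u,v} ∈ E} w(u,v) (f(u)-f(v))²` (each unordered edge once). -/
def energy (w : Fin n → Fin n → ℝ) (f : Fin n → ℝ) : ℝ :=
  (1 / 2 : ℝ) * ∑ u, ∑ v, w u v * (f u - f v) ^ 2

/-- Rayleigh quotient of `f`. -/
noncomputable def rayleigh (w : Fin n → Fin n → ℝ) (f : Fin n → ℝ) : ℝ :=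
  energy w f / normWsq w f

/-- Signless energy `∑_{{u,v} ∈ E} w(u,v) (f(u)+f(v))²`. -/
def signEnergy (w : Fin n → Fin n → ℝ) (f : Fin n → ℝ) : ℝ :=
  (1 / 2 : ℝ) * ∑ u, ∑ v, w u v * (f u + f v) ^ 2

/-- Signless Rayleigh quotient `R⁺(f)`. -/
noncomputable def rayleighP (w : Fin n → Fin n → ℝ) (f : Fin n → ℝ) : ℝ :=
  signEnergy w f / normWsq w f

/-- Normalized Laplacian `𝓛 = I - D^{-1/2} A D^{-1/2}`. -/
noncomputable def normLap (w : Fin n → Fin n → ℝ) : Matrix (Fin n) (Fin n) ℝ :=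
  Matrix.of fun u v =>
    (if u = v then (1 : ℝ) else 0) - w u v / (Real.sqrt (deg w u) * Real.sqrt (deg w v))

/-- Signless normalized Laplacian `𝓜 = I + D^{-1/2} A D^{-1/2}`. -/
noncomputable def signLap (w : Fin n → Fin n → ℝ) : Matrix (Fin n) (Fin n) ℝ :=
  Matrix.of fun u v =>
    (if u = v then (1 : ℝ) else 0) + w u v / (Real.sqrt (deg w u) * Real.sqrt (deg w v))

/-- The `k`-th smallest eigenvalue of a Hermitian matrix (1-based index `k`). -/
noncomputable def sortedEig {A : Matrix (Fin n) (Fin n) ℝ} (hA : A.IsHermitian) (k : ℕ) : ℝ :=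
  if h : k - 1 < n then hA.eigenvalues (Tuple.sort hA.eigenvalues ⟨k - 1, h⟩) else 0

/-- Threshold set `V_f(t) = {v : f(v) ≥ t}`. -/
noncomputable def thresholdSet (f : Fin n → ℝ) (t : ℝ) : Finset (Fin n) :=
  Finset.univ.filter fun v => t ≤ f v

/-- `φ(f)`: best conductance among threshold sets of `f` that are nonempty and proper. -/
noncomputable def phiF (w : Fin n → Fin n → ℝ) (f : Fin n → ℝ) : ℝ :=
  sInf { x | ∃ t : ℝ, (thresholdSet f t).Nonempty ∧ thresholdSet f t ≠ Finset.univ ∧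
      x = conductance w (thresholdSet f t) }

/-- Support of a function, as a finset. -/
noncomputable def supp (f : Fin n → ℝ) : Finset (Fin n) :=
  Finset.univ.filter fun v => f v ≠ 0

/-- `L_f(t) = {v : f(v) ≤ -t}`. -/
noncomputable def Lset (f : Fin n → ℝ) (t : ℝ) : Finset (Fin n) :=
  Finset.univ.filter fun v => f v ≤ -t

/-- `R_f(t) = {v : f(v) ≥ t}`. -/
noncomputable def Rset (f : Fin n → ℝ) (t : ℝ) : Finset (Fin n) :=
  Finset.univ.filter fun v => t ≤ f v

/-- Bipartiteness ratio of an induced cut `(L,R)` (for disjoint `L`, `R`). -/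
noncomputable def biRatio (w : Fin n → Fin n → ℝ) (L R : Finset (Fin n)) : ℝ :=
  (cutWeight w L L + cutWeight w R R + cutWeight w (L ∪ R) (L ∪ R)ᶜ) / vol w (L ∪ R)

/-- `β(f)`: best bipartiteness ratio among threshold cuts of `f`. -/
noncomputable def betaF (w : Fin n → Fin n → ℝ) (f : Fin n → ℝ) : ℝ :=
  sInf { x | ∃ t : ℝ, 0 < t ∧ (Lset f t ∪ Rset f t).Nonempty ∧
      x = biRatio w (Lset f t) (Rset f t) }

/-- `β(G)`: minimum bipartiteness ratio over all induced cuts. -/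
noncomputable def minBeta (w : Fin n → Fin n → ℝ) : ℝ :=
  sInf { x | ∃ L R : Finset (Fin n), Disjoint L R ∧ (L ∪ R).Nonempty ∧ x = biRatio w L R }

/-- Energy of `f` restricted to the interval `(b,a]`:
`∑_{{u,v} ∈ E} w(u,v) · len((b,a] ∩ [f(u),f(v)])²`. -/
def intervalEnergy (w : Fin n → Fin n → ℝ) (f : Fin n → ℝ) (b a : ℝ) : ℝ :=
  (1 / 2 : ℝ) * ∑ u, ∑ v,
    w u v * max 0 (min a (max (f u) (f v)) - max b (min (f u) (f v))) ^ 2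

/-- The relative distance `dist(x,R) = inf_{y ∈ R} |x-y|/y` from a point to a region. -/
noncomputable def regionDist (x : ℝ) (R : Set ℝ) : ℝ :=
  sInf ((fun y => |x - y| / y) '' R)

/-- `g` is a `(2k+1)`-step approximation of `f`: there are thresholds
`0 = t₀ ≤ t₁ ≤ … ≤ t_{2k}` and `g(v)` is a threshold closest to `f(v)`. -/
def IsStepApprox (f g : Fin n → ℝ) (k : ℕ) : Prop :=
  ∃ t : Fin (2 * k + 1) → ℝ, t 0 = 0 ∧ Monotone t ∧
    ∀ v, (∃ i, g v = t i) ∧ ∀ i, |f v - g v| ≤ |f v - t i|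

/-- `g` is a symmetric `(2k+1)`-step approximation of `f`: there are thresholds
`0 = t₀ ≤ t₁ ≤ … ≤ t_{2k}` and `g(v)` is a value among `{±t_i}` closest to `f(v)`. -/
def IsSymStepApprox (f g : Fin n → ℝ) (k : ℕ) : Prop :=
  ∃ t : Fin (2 * k + 1) → ℝ, t 0 = 0 ∧ Monotone t ∧
    ∀ v, (∃ i, g v = t i ∨ g v = -t i) ∧
      ∀ i, |f v - g v| ≤ |f v - t i| ∧ |f v - g v| ≤ |f v + t i|

/-- Edge weights of the induced subgraph on `U`. -/
def inducedW (w : Fin n → Fin n → ℝ) (U : Finset (Fin n)) : Fin n → Fin n → ℝ :=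
  fun u v => if u ∈ U ∧ v ∈ U then w u v else 0

/-- Uncutness `γ(L,R) = w(E(L)) + w(E(R)) + w(E(L∪R, complement))`. -/
noncomputable def uncut (w : Fin n → Fin n → ℝ) (L R : Finset (Fin n)) : ℝ :=
  (1 / 2 : ℝ) * cutWeight w L L + (1 / 2 : ℝ) * cutWeight w R R +
    cutWeight w (L ∪ R) (L ∪ R)ᶜ

section Helpers

variable {n : ℕ}

lemma deg_pos {w : Fin n → Fin n → ℝ} (hdeg : ∀ v, 1 ≤ deg w v) (v : Fin n) :
    0 < deg w v := lt_of_lt_of_le one_pos (hdeg v)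

lemma energy_nonneg {w : Fin n → Fin n → ℝ} (hnn : ∀ u v, 0 ≤ w u v) (f : Fin n → ℝ) :
    0 ≤ energy w f := by
  unfold energy
  apply mul_nonneg (by norm_num)
  exact Finset.sum_nonneg fun u _ => Finset.sum_nonneg fun v _ =>
    mul_nonneg (hnn u v) (sq_nonneg _)

lemma normWsq_nonneg {w : Fin n → Fin n → ℝ} (hdeg : ∀ v, 1 ≤ deg w v) (f : Fin n → ℝ) :
    0 ≤ normWsq w f :=
  Finset.sum_nonneg fun v _ => mul_nonneg (deg_pos hdeg v).le (sq_nonneg _)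

lemma normWsq_eq_zero {w : Fin n → Fin n → ℝ} (hdeg : ∀ v, 1 ≤ deg w v) {f : Fin n → ℝ}
    (h : normWsq w f = 0) : ∀ v, f v = 0 := by
  intro v
  have hterm := (Finset.sum_eq_zero_iff_of_nonneg
    (fun v _ => mul_nonneg (deg_pos hdeg v).le (sq_nonneg (f v)))).1 h v (Finset.mem_univ v)
  have := (deg_pos hdeg v).ne'
  have : f v ^ 2 = 0 := by
    rcases mul_eq_zero.1 hterm with h' | h'
    · exact absurd h' this
    · exact h'
  exact pow_eq_zero_iff (by norm_num) |>.1 this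

lemma max_sq_add_max_neg_sq (a : ℝ) : max a 0 ^ 2 + max (-a) 0 ^ 2 = a ^ 2 := by
  rcases le_total a 0 with h | h
  · rw [max_eq_right h, max_eq_left (neg_nonneg.2 h)]; ring
  · rw [max_eq_left h, max_eq_right (neg_nonpos.2 h)]; ring

lemma posneg_sq (a b : ℝ) :
    (max a 0 - max b 0) ^ 2 + (max (-a) 0 - max (-b) 0) ^ 2 ≤ (a - b) ^ 2 := by
  have e1 : max a 0 * max (-a) 0 = 0 := by
    rcases le_total a 0 with h | h
    · rw [max_eq_right h]; ring
    · rw [max_eq_right (neg_nonpos.2 h)]; ring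
  have e2 : max b 0 * max (-b) 0 = 0 := by
    rcases le_total b 0 with h | h
    · rw [max_eq_right h]; ring
    · rw [max_eq_right (neg_nonpos.2 h)]; ring
  have ha : max a 0 - max (-a) 0 = a := by
    rcases le_total a 0 with h | h
    · rw [max_eq_right h, max_eq_left (neg_nonneg.2 h)]; ring
    · rw [max_eq_left h, max_eq_right (neg_nonpos.2 h)]; ring
  have hb : max b 0 - max (-b) 0 = b := by
    rcases le_total b 0 with h | h
    · rw [max_eq_right h, max_eq_left (neg_nonneg.2 h)]; ring
    · rw [max_eq_left h, max_eq_right (neg_nonpos.2 h)]; ring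
  have m1 : 0 ≤ max a 0 * max (-b) 0 :=
    mul_nonneg (le_max_right _ _) (le_max_right _ _)
  have m2 : 0 ≤ max b 0 * max (-a) 0 :=
    mul_nonneg (le_max_right _ _) (le_max_right _ _)
  have key : (max a 0 - max b 0) ^ 2 + (max (-a) 0 - max (-b) 0) ^ 2
      ≤ ((max a 0 - max (-a) 0) - (max b 0 - max (-b) 0)) ^ 2 := by
    nlinarith [e1, e2, m1, m2]
  rwa [ha, hb] at key

/-- Energy expansion for symmetric weights. -/
lemma energy_eq {w : Fin n → Fin n → ℝ} (hsym : ∀ u v, w u v = w v u) (g : Fin n → ℝ) :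
    energy w g = (∑ u, deg w u * g u ^ 2) - ∑ u, ∑ v, w u v * (g u * g v) := by
  unfold energy
  have expand : ∀ u : Fin n, ∑ v, w u v * (g u - g v) ^ 2
      = ∑ v, (w u v * g u ^ 2 + w u v * g v ^ 2 - 2 * (w u v * (g u * g v))) :=
    fun u => Finset.sum_congr rfl fun v _ => by ring
  simp only [expand, Finset.sum_sub_distrib, Finset.sum_add_distrib]
  have h2 : ∑ u : Fin n, ∑ v : Fin n, w u v * g v ^ 2
      = ∑ u : Fin n, ∑ v : Fin n, w u v * g u ^ 2 := by
    rw [Finset.sum_comm]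
    exact Finset.sum_congr rfl fun u _ => Finset.sum_congr rfl fun v _ => by rw [hsym]
  have h1 : ∀ u : Fin n, ∑ v, w u v * g u ^ 2 = deg w u * g u ^ 2 := fun u => by
    rw [← Finset.sum_mul]; rfl
  have h3 : ∑ u : Fin n, ∑ v : Fin n, 2 * (w u v * (g u * g v))
      = 2 * ∑ u : Fin n, ∑ v : Fin n, w u v * (g u * g v) := by
    rw [Finset.mul_sum]
    exact Finset.sum_congr rfl fun u _ => by rw [Finset.mul_sum]
  simp only [h2, h1, h3]
  ring

/-- Weighted median: there is `c` with both strict-side volumes at most half. -/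
lemma exists_median {w : Fin n → Fin n → ℝ} (hdeg : ∀ v, 1 ≤ deg w v) (hn : 0 < n)
    (g : Fin n → ℝ) :
    ∃ c : ℝ,
      vol w (Finset.univ.filter fun v => c < g v) ≤ vol w Finset.univ / 2 ∧
      vol w (Finset.univ.filter fun v => g v < c) ≤ vol w Finset.univ / 2 := by
  classical
  have hdnn : ∀ v : Fin n, 0 ≤ deg w v := fun v => (deg_pos hdeg v).le
  have hvol_mono : ∀ S T : Finset (Fin n), S ⊆ T → vol w S ≤ vol w T := fun S T hST =>
    Finset.sum_le_sum_of_subset_of_nonneg hST (fun v _ _ => hdnn v)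
  have hvol_nonneg : ∀ S : Finset (Fin n), 0 ≤ vol w S := fun S =>
    Finset.sum_nonneg fun v _ => hdnn v
  set V := vol w (Finset.univ : Finset (Fin n)) with hV
  have hT : (Finset.univ.image g : Finset ℝ).Nonempty := by
    refine Finset.Nonempty.image ?_ g
    exact Finset.univ_nonempty_iff.2 (Fin.pos_iff_nonempty.1 hn)
  set Sgood := (Finset.univ.image g).filter
    (fun t => V / 2 ≤ vol w (Finset.univ.filter fun v => g v ≤ t)) with hSgood
  have hSgood_ne : Sgood.Nonempty := by
    refine ⟨(Finset.univ.image g).max' hT, Finset.mem_filter.2 ⟨(Finset.univ.image g).max'_mem hT, ?_⟩⟩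
    have : (Finset.univ.filter fun v => g v ≤ (Finset.univ.image g).max' hT) = Finset.univ := by
      apply Finset.filter_true_of_mem
      intro v _
      exact Finset.le_max' _ _ (Finset.mem_image_of_mem g (Finset.mem_univ v))
    rw [this]
    linarith [hvol_nonneg (Finset.univ : Finset (Fin n))]
  set c := Sgood.min' hSgood_ne with hc
  have hcmem := Sgood.min'_mem hSgood_ne
  have hchalf : V / 2 ≤ vol w (Finset.univ.filter fun v => g v ≤ c) :=
    (Finset.mem_filter.1 hcmem).2
  refine ⟨c, ?_, ?_⟩
  · have hsplit : vol w (Finset.univ.filter fun v => g v ≤ c)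
        + vol w (Finset.univ.filter fun v => c < g v) = V := by
      rw [hV]
      unfold vol
      rw [← Finset.sum_filter_add_sum_filter_not Finset.univ (fun v => g v ≤ c)]
      congr 1
      apply Finset.sum_congr _ (fun _ _ => rfl)
      apply Finset.filter_congr
      intro v _
      simp [not_le]
    linarith
  · by_cases hemp : (Finset.univ.filter fun v => g v < c) = ∅
    · rw [hemp]
      unfold vol
      simp
      linarith [hvol_nonneg (Finset.univ : Finset (Fin n))]
    · obtain ⟨v0, hv0mem, hv0max⟩ := Finset.exists_max_image _ g
        (Finset.nonempty_of_ne_empty hemp)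
      have hv0lt : g v0 < c := (Finset.mem_filter.1 hv0mem).2
      have hnotgood : g v0 ∉ Sgood := by
        intro hmem
        exact absurd (Sgood.min'_le _ hmem) (not_le.2 hv0lt)
      have himg : g v0 ∈ Finset.univ.image g := Finset.mem_image_of_mem g (Finset.mem_univ v0)
      have hsmall : vol w (Finset.univ.filter fun v => g v ≤ g v0) < V / 2 := by
        by_contra hcon
        exact hnotgood (Finset.mem_filter.2 ⟨himg, not_lt.1 hcon⟩)
      have hsub : (Finset.univ.filter fun v => g v < c)
          ⊆ (Finset.univ.filter fun v => g v ≤ g v0) := by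
        intro v hv
        exact Finset.mem_filter.2 ⟨Finset.mem_univ v, hv0max v hv⟩
      linarith [hvol_mono _ _ hsub]

end Helpers

open scoped Matrix

section Spectral

variable {n : ℕ}

lemma comb_quadratic {A : Matrix (Fin n) (Fin n) ℝ} (hA : A.IsHermitian)
    (i j : Fin n) (hij : i ≠ j) (a b : ℝ) :
    (fun v => a * hA.eigenvectorBasis i v + b * hA.eigenvectorBasis j v) ⬝ᵥ
      (A *ᵥ fun v => a * hA.eigenvectorBasis i v + b * hA.eigenvectorBasis j v)
      = a ^ 2 * hA.eigenvalues i + b ^ 2 * hA.eigenvalues j ∧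
    (∑ v, (a * hA.eigenvectorBasis i v + b * hA.eigenvectorBasis j v) ^ 2)
      = a ^ 2 + b ^ 2 := by
  classical
  have orth := hA.eigenvectorBasis.orthonormal
  rw [orthonormal_iff_ite] at orth
  have D : ∀ i' j' : Fin n, ∑ v, hA.eigenvectorBasis i' v * hA.eigenvectorBasis j' v
      = if i' = j' then (1 : ℝ) else 0 := by
    intro i' j'
    simpa [PiLp.inner_apply, mul_comm] using orth i' j'
  have hmv : (A *ᵥ fun v => a * hA.eigenvectorBasis i v + b * hA.eigenvectorBasis j v)
      = fun v => a * (hA.eigenvalues i * hA.eigenvectorBasis i v)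
          + b * (hA.eigenvalues j * hA.eigenvectorBasis j v) := by
    have e1 := hA.mulVec_eigenvectorBasis i
    have e2 := hA.mulVec_eigenvectorBasis j
    have : (fun v => a * hA.eigenvectorBasis i v + b * hA.eigenvectorBasis j v)
        = a • ⇑(hA.eigenvectorBasis i) + b • ⇑(hA.eigenvectorBasis j) := by
      funext v; simp
    rw [this, Matrix.mulVec_add, Matrix.mulVec_smul, Matrix.mulVec_smul, e1, e2]
    funext v; simp only [Pi.add_apply, Pi.smul_apply, smul_eq_mul]; try ring
  constructor
  · rw [hmv]
    unfold dotProduct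
    have expand : ∀ v : Fin n,
        (a * hA.eigenvectorBasis i v + b * hA.eigenvectorBasis j v) *
          (a * (hA.eigenvalues i * hA.eigenvectorBasis i v)
            + b * (hA.eigenvalues j * hA.eigenvectorBasis j v))
        = a ^ 2 * hA.eigenvalues i * (hA.eigenvectorBasis i v * hA.eigenvectorBasis i v)
          + a * b * hA.eigenvalues j * (hA.eigenvectorBasis i v * hA.eigenvectorBasis j v)
          + a * b * hA.eigenvalues i * (hA.eigenvectorBasis j v * hA.eigenvectorBasis i v)
          + b ^ 2 * hA.eigenvalues j * (hA.eigenvectorBasis j v * hA.eigenvectorBasis j v) := by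
      intro v; ring
    rw [Finset.sum_congr rfl fun v _ => expand v]
    simp only [Finset.sum_add_distrib, ← Finset.mul_sum, D, if_pos rfl, if_neg hij,
      if_neg hij.symm]
    norm_num
  · have expand : ∀ v : Fin n,
        (a * hA.eigenvectorBasis i v + b * hA.eigenvectorBasis j v) ^ 2
        = a ^ 2 * (hA.eigenvectorBasis i v * hA.eigenvectorBasis i v)
          + 2 * a * b * (hA.eigenvectorBasis i v * hA.eigenvectorBasis j v)
          + b ^ 2 * (hA.eigenvectorBasis j v * hA.eigenvectorBasis j v) := by
      intro v; ring
    rw [Finset.sum_congr rfl fun v _ => expand v]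
    simp only [Finset.sum_add_distrib, ← Finset.mul_sum, D, if_pos rfl, if_neg hij]
    norm_num

lemma spectral_part {w : Fin n → Fin n → ℝ} (hn : 2 ≤ n) (hdeg : ∀ v, 1 ≤ deg w v)
    (hH : (normLap w).IsHermitian) :
    ∃ ψ : Fin n → ℝ, (∑ v, Real.sqrt (deg w v) * ψ v = 0) ∧
      0 < ∑ v, ψ v ^ 2 ∧
      ψ ⬝ᵥ (normLap w *ᵥ ψ) ≤ sortedEig hH 2 * ∑ v, ψ v ^ 2 := by
  classical
  have h0n : (0 : ℕ) < n := by omega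
  have h1n : (1 : ℕ) < n := by omega
  set i₁ : Fin n := Tuple.sort hH.eigenvalues ⟨0, h0n⟩ with hi1
  set i₂ : Fin n := Tuple.sort hH.eigenvalues ⟨1, h1n⟩ with hi2
  have hle : hH.eigenvalues i₁ ≤ hH.eigenvalues i₂ := by
    have := Tuple.monotone_sort hH.eigenvalues
      (show (⟨0, h0n⟩ : Fin n) ≤ ⟨1, h1n⟩ by simp [Fin.mk_le_mk])
    simpa using this
  have hij : i₁ ≠ i₂ := by
    intro h
    have := (Tuple.sort hH.eigenvalues).injective h
    simp [Fin.mk.injEq] at this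
  have hsE : sortedEig hH 2 = hH.eigenvalues i₂ := by
    unfold sortedEig
    rw [dif_pos h1n]
  set α : ℝ := ∑ v, Real.sqrt (deg w v) * hH.eigenvectorBasis i₁ v with hα
  set β : ℝ := ∑ v, Real.sqrt (deg w v) * hH.eigenvectorBasis i₂ v with hβ
  obtain ⟨a, b, hab0, habo⟩ : ∃ a b : ℝ, (a ≠ 0 ∨ b ≠ 0) ∧ a * α + b * β = 0 := by
    by_cases hα0 : α = 0
    · exact ⟨1, 0, Or.inl one_ne_zero, by rw [hα0]; ring⟩
    · exact ⟨β, -α, Or.inr (neg_ne_zero.2 hα0), by ring⟩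
  refine ⟨fun v => a * hH.eigenvectorBasis i₁ v + b * hH.eigenvectorBasis i₂ v, ?_, ?_, ?_⟩
  · have expand : ∀ v : Fin n, Real.sqrt (deg w v) *
        (a * hH.eigenvectorBasis i₁ v + b * hH.eigenvectorBasis i₂ v)
        = a * (Real.sqrt (deg w v) * hH.eigenvectorBasis i₁ v)
          + b * (Real.sqrt (deg w v) * hH.eigenvectorBasis i₂ v) := fun v => by ring
    rw [Finset.sum_congr rfl fun v _ => expand v, Finset.sum_add_distrib,
      ← Finset.mul_sum, ← Finset.mul_sum]
    exact habo
  · rw [(comb_quadratic hH i₁ i₂ hij a b).2]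
    rcases hab0 with h | h
    · nlinarith [pow_two_pos_of_ne_zero h, sq_nonneg b]
    · nlinarith [pow_two_pos_of_ne_zero h, sq_nonneg a]
  · rw [(comb_quadratic hH i₁ i₂ hij a b).1, (comb_quadratic hH i₁ i₂ hij a b).2, hsE]
    nlinarith [sq_nonneg a, hle]

end Spectral

/-- There is a nonzero nonnegative `f` with `R(f) ≤ λ₂`,
`vol(supp(f)) ≤ vol(V)/2`, and `‖f‖_w = 1`. -/
theorem exists_small_support_test_function
    (hn : 2 ≤ n) (w : Fin n → Fin n → ℝ)
    (hsym : ∀ u v, w u v = w v u) (hnn : ∀ u v, 0 ≤ w u v)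
    (hloop : ∀ v, w v v = 0) (hdeg : ∀ v, 1 ≤ deg w v)
    (hH : (normLap w).IsHermitian) :
    ∃ f : Fin n → ℝ, f ≠ 0 ∧ (∀ v, 0 ≤ f v) ∧
      rayleigh w f ≤ sortedEig hH 2 ∧
      vol w (supp f) ≤ vol w Finset.univ / 2 ∧
      normWsq w f = 1 := by
  classical
  obtain ⟨ψ, hψorth, hψpos, hψquad⟩ := spectral_part hn hdeg hH
  set lam := sortedEig hH 2 with hlam
  set r : Fin n → ℝ := fun v => Real.sqrt (deg w v) with hr
  have hrpos : ∀ v, 0 < r v := fun v => Real.sqrt_pos.2 (deg_pos hdeg v)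
  have hr2 : ∀ v, r v ^ 2 = deg w v := fun v => Real.sq_sqrt (deg_pos hdeg v).le
  set g : Fin n → ℝ := fun v => ψ v / r v with hg
  -- norm identity
  have hNg : normWsq w g = ∑ v, ψ v ^ 2 := by
    unfold normWsq
    refine Finset.sum_congr rfl fun v _ => ?_
    rw [hg]
    have h0 : deg w v ≠ 0 := (deg_pos hdeg v).ne'
    rw [div_pow, hr2 v]
    field_simp
  have hNgpos : 0 < normWsq w g := by rw [hNg]; exact hψpos
  -- energy identity
  have hRHS : ψ ⬝ᵥ (normLap w *ᵥ ψ)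
      = (∑ u, ψ u ^ 2) - ∑ u, ∑ v, w u v * (g u * g v) := by
    unfold Matrix.mulVec dotProduct normLap
    simp only [Matrix.of_apply]
    rw [← Finset.sum_sub_distrib]
    refine Finset.sum_congr rfl fun u _ => ?_
    rw [Finset.mul_sum]
    have key : ∀ v : Fin n,
        ψ u * (((if u = v then (1:ℝ) else 0) - w u v / (r u * r v)) * ψ v)
        = (if u = v then ψ u ^ 2 else 0) - w u v * (g u * g v) := by
      intro v
      by_cases h : u = v
      · subst h
        simp only [hg, eq_self_iff_true, if_true]
        ring
      · simp only [if_neg h, hg]; ring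
    rw [Finset.sum_congr rfl fun v _ => key v, Finset.sum_sub_distrib]
    have hite : ∑ v : Fin n, (if u = v then ψ u ^ 2 else 0) = ψ u ^ 2 := by simp
    rw [hite]
  have hEg : energy w g = ψ ⬝ᵥ (normLap w *ᵥ ψ) := by
    have hterm : ∑ u, deg w u * g u ^ 2 = ∑ u, ψ u ^ 2 := by
      refine Finset.sum_congr rfl fun v _ => ?_
      rw [hg]
      have h0 : deg w v ≠ 0 := (deg_pos hdeg v).ne'
      rw [div_pow, hr2 v]
      field_simp
    rw [energy_eq hsym, hRHS, hterm]
  have hRay_g : energy w g ≤ lam * normWsq w g := by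
    rw [hEg, hNg]; exact hψquad
  -- weighted mean of g is zero
  have horthg : ∑ v, deg w v * g v = 0 := by
    rw [← hψorth]
    refine Finset.sum_congr rfl fun v _ => ?_
    rw [hg]
    have h0 : r v ≠ 0 := (hrpos v).ne'
    rw [← hr2 v]
    field_simp
    rw [Real.sqrt_sq (hrpos v).le]; ring
  -- median shift
  obtain ⟨c, hc1, hc2⟩ := exists_median hdeg (by omega) g
  set h : Fin n → ℝ := fun v => g v - c with hh
  have hEh : energy w h = energy w g := by
    unfold energy
    congr 1
    refine Finset.sum_congr rfl fun u _ => Finset.sum_congr rfl fun v _ => ?_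
    simp only [hh]
    ring_nf
  have hvolnn : 0 ≤ vol w Finset.univ :=
    Finset.sum_nonneg fun v _ => (deg_pos hdeg v).le
  have hNh : normWsq w h = normWsq w g + c ^ 2 * vol w Finset.univ := by
    unfold normWsq vol
    have key : ∀ v : Fin n, deg w v * h v ^ 2
        = deg w v * g v ^ 2 - 2 * c * (deg w v * g v) + c ^ 2 * deg w v := by
      intro v; simp only [hh]; ring
    rw [Finset.sum_congr rfl fun v _ => key v]
    rw [Finset.sum_add_distrib, Finset.sum_sub_distrib, ← Finset.mul_sum, ← Finset.mul_sum,
      horthg]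
    ring
  have hNh_ge : normWsq w g ≤ normWsq w h := by
    rw [hNh]
    nlinarith [sq_nonneg c]
  have hNhpos : 0 < normWsq w h := lt_of_lt_of_le hNgpos hNh_ge
  set Rh := energy w h / normWsq w h with hRh_def
  have hRh : Rh ≤ lam := by
    have h1 : Rh ≤ energy w g / normWsq w g := by
      rw [hRh_def, hEh]
      gcongr
      exact energy_nonneg hnn g
    calc Rh ≤ energy w g / normWsq w g := h1
      _ ≤ lam := (div_le_iff₀ hNgpos).2 hRay_g
  have hERh : energy w h = Rh * normWsq w h := by
    rw [hRh_def, div_mul_cancel₀ _ hNhpos.ne']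
  -- positive and negative parts
  set f₁ : Fin n → ℝ := fun v => max (h v) 0 with hf1
  set f₂ : Fin n → ℝ := fun v => max (-h v) 0 with hf2
  have hNsplit : normWsq w f₁ + normWsq w f₂ = normWsq w h := by
    unfold normWsq
    rw [← Finset.sum_add_distrib]
    refine Finset.sum_congr rfl fun v _ => ?_
    simp only [hf1, hf2]
    rw [← mul_add, max_sq_add_max_neg_sq]
  have hEsplit : energy w f₁ + energy w f₂ ≤ energy w h := by
    unfold energy
    rw [← mul_add, ← Finset.sum_add_distrib]
    have inner_eq : ∀ u : Fin n,
        (∑ v, w u v * (f₁ u - f₁ v) ^ 2) + ∑ v, w u v * (f₂ u - f₂ v) ^ 2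
        = ∑ v, (w u v * (f₁ u - f₁ v) ^ 2 + w u v * (f₂ u - f₂ v) ^ 2) := by
      intro u; rw [Finset.sum_add_distrib]
    rw [Finset.sum_congr rfl fun u _ => inner_eq u]
    apply mul_le_mul_of_nonneg_left _ (by norm_num : (0:ℝ) ≤ 1/2)
    refine Finset.sum_le_sum fun u _ => Finset.sum_le_sum fun v _ => ?_
    rw [← mul_add]
    refine mul_le_mul_of_nonneg_left ?_ (hnn u v)
    simp only [hf1, hf2]
    exact posneg_sq (h u) (h v)
  -- supports of the parts
  have hsupp1 : supp f₁ = Finset.univ.filter fun v => c < g v := by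
    unfold supp
    apply Finset.filter_congr
    intro v _
    simp only [hf1, hh]
    constructor
    · intro hne
      by_contra hcon
      exact hne (max_eq_right (by linarith [not_lt.1 hcon]))
    · intro hlt
      rw [max_eq_left (by linarith)]
      intro h0
      linarith [h0]
  have hsupp2 : supp f₂ = Finset.univ.filter fun v => g v < c := by
    unfold supp
    apply Finset.filter_congr
    intro v _
    simp only [hf2, hh]
    constructor
    · intro hne
      by_contra hcon
      exact hne (max_eq_right (by linarith [not_lt.1 hcon]))
    · intro hlt
      rw [max_eq_left (by linarith)]
      intro h0
      linarith [h0]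
  -- select the good part
  have hselect : ∃ F : Fin n → ℝ, (∀ v, 0 ≤ F v) ∧ 0 < normWsq w F ∧
      energy w F ≤ Rh * normWsq w F ∧ vol w (supp F) ≤ vol w Finset.univ / 2 := by
    by_cases h1 : normWsq w f₁ = 0
    · by_cases h2 : normWsq w f₂ = 0
      · exfalso; rw [← hNsplit, h1, h2] at hNhpos; simp at hNhpos
      · have hz := normWsq_eq_zero hdeg h1
        have hE1 : energy w f₁ = 0 := by
          unfold energy
          have : ∀ u : Fin n, ∀ v : Fin n, w u v * (f₁ u - f₁ v) ^ 2 = 0 := by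
            intro u v; rw [hz u, hz v]; ring
          simp only [this, Finset.sum_const_zero, mul_zero]
        have hN2 : normWsq w f₂ = normWsq w h := by linarith
        refine ⟨f₂, fun v => le_max_right _ _, ?_, ?_, ?_⟩
        · exact lt_of_le_of_ne (normWsq_nonneg hdeg f₂) (Ne.symm h2)
        · rw [hN2, ← hERh]; linarith [energy_nonneg hnn f₁]
        · rw [hsupp2]; exact hc2
    · by_cases h2 : normWsq w f₂ = 0
      · have hz := normWsq_eq_zero hdeg h2
        have hE2 : energy w f₂ = 0 := by
          unfold energy
          have : ∀ u : Fin n, ∀ v : Fin n, w u v * (f₂ u - f₂ v) ^ 2 = 0 := by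
            intro u v; rw [hz u, hz v]; ring
          simp only [this, Finset.sum_const_zero, mul_zero]
        have hN1 : normWsq w f₁ = normWsq w h := by linarith
        refine ⟨f₁, fun v => le_max_right _ _, ?_, ?_, ?_⟩
        · exact lt_of_le_of_ne (normWsq_nonneg hdeg f₁) (Ne.symm h1)
        · rw [hN1, ← hERh]; linarith [energy_nonneg hnn f₂]
        · rw [hsupp1]; exact hc1
      · have hp1 : 0 < normWsq w f₁ :=
          lt_of_le_of_ne (normWsq_nonneg hdeg f₁) (Ne.symm h1)
        have hp2 : 0 < normWsq w f₂ :=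
          lt_of_le_of_ne (normWsq_nonneg hdeg f₂) (Ne.symm h2)
        have hor : energy w f₁ ≤ Rh * normWsq w f₁ ∨ energy w f₂ ≤ Rh * normWsq w f₂ := by
          by_contra hcon
          push_neg at hcon
          obtain ⟨hg1, hg2⟩ := hcon
          have hmul : Rh * normWsq w h = Rh * normWsq w f₁ + Rh * normWsq w f₂ := by
            rw [← hNsplit, mul_add]
          linarith
        rcases hor with hgood | hgood
        · exact ⟨f₁, fun v => le_max_right _ _, hp1, hgood, by rw [hsupp1]; exact hc1⟩
        · exact ⟨f₂, fun v => le_max_right _ _, hp2, hgood, by rw [hsupp2]; exact hc2⟩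
  obtain ⟨F, hFnn, hFpos, hFE, hFsupp⟩ := hselect
  -- normalize
  set s : ℝ := (Real.sqrt (normWsq w F))⁻¹ with hs
  have hspos : 0 < s := inv_pos.2 (Real.sqrt_pos.2 hFpos)
  have hs2 : s ^ 2 * normWsq w F = 1 := by
    rw [hs, inv_pow, Real.sq_sqrt hFpos.le]
    exact inv_mul_cancel₀ hFpos.ne'
  refine ⟨fun v => s * F v, ?_, ?_, ?_, ?_, ?_⟩
  · intro h0
    have h1 : normWsq w (fun v => s * F v) = 0 := by
      rw [h0]; unfold normWsq; simp
    have h2 : normWsq w (fun v => s * F v) = s ^ 2 * normWsq w F := by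
      unfold normWsq
      rw [Finset.mul_sum]
      exact Finset.sum_congr rfl fun v _ => by ring
    rw [h2, hs2] at h1
    norm_num at h1
  · exact fun v => mul_nonneg hspos.le (hFnn v)
  · have hEs : energy w (fun v => s * F v) = s ^ 2 * energy w F := by
      unfold energy
      have key : ∑ u, ∑ v, w u v * ((fun v => s * F v) u - (fun v => s * F v) v) ^ 2
          = ∑ u, ∑ v, s ^ 2 * (w u v * (F u - F v) ^ 2) :=
        Finset.sum_congr rfl fun u _ => Finset.sum_congr rfl fun v _ => by ring
      rw [key]
      simp only [← Finset.mul_sum]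
      ring
    have hNs : normWsq w (fun v => s * F v) = s ^ 2 * normWsq w F := by
      unfold normWsq
      rw [Finset.mul_sum]
      exact Finset.sum_congr rfl fun v _ => by ring
    unfold rayleigh
    rw [hEs, hNs, mul_div_mul_left _ _ (pow_ne_zero 2 hspos.ne')]
    calc energy w F / normWsq w F ≤ Rh := (div_le_iff₀ hFpos).2 hFE
      _ ≤ lam := hRh
  · have hsuppeq : supp (fun v => s * F v) = supp F := by
      unfold supp
      apply Finset.filter_congr
      intro v _
      show s * F v ≠ 0 ↔ F v ≠ 0
      rw [mul_ne_zero_iff]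
      simp [hspos.ne']
    rw [hsuppeq]
    exact hFsupp
  · have h2 : normWsq w (fun v => s * F v) = s ^ 2 * normWsq w F := by
      unfold normWsq
      rw [Finset.mul_sum]
      exact Finset.sum_congr rfl fun v _ => by ring
    rw [h2, hs2]


end

end CheegerHigher
end

section
/- Let f₁, f₂, …, f_k : V → ℝ be k nonzero disjointly supported functions, where 1 ≤ k ≤ n. Then λ_k ≤ 2 · max_{1≤i≤k} R(f_i). -/
open scoped Classical

namespace CheegerHigher

noncomputable section

variable {n : ℕ}

-- ===== auxiliary lemmas =====

private lemma sum_mul_sum_eq {k : ℕ} (a b : Fin k → ℝ)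
    (h : ∀ i j, i ≠ j → a i = 0 ∨ b j = 0) :
    (∑ i, a i) * (∑ j, b j) = ∑ i, a i * b i := by
  rw [Finset.sum_mul_sum]
  refine Finset.sum_congr rfl fun i _ => ?_
  refine Finset.sum_eq_single i (fun j _ hj => ?_) (by simp)
  rcases h i j (fun he => hj (he ▸ rfl)) with h0 | h0 <;> simp [h0]

private lemma key_ineq {k : ℕ} (a b : Fin k → ℝ)
    (ha : ∀ i j, i ≠ j → a i = 0 ∨ a j = 0)
    (hb : ∀ i j, i ≠ j → b i = 0 ∨ b j = 0) :
    ((∑ i, a i) - (∑ i, b i)) ^ 2 ≤ 2 * ∑ i, (a i - b i) ^ 2 := by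
  have hA : (∑ i, a i) * (∑ i, a i) = ∑ i, a i * a i := sum_mul_sum_eq a a ha
  have hB : (∑ i, b i) * (∑ i, b i) = ∑ i, b i * b i := sum_mul_sum_eq b b hb
  have hab : (∑ i, a i * b i) = (∑ i, a i) * (∑ i, b i) ∨ (∑ i, a i * b i) = 0 := by
    by_cases hc : ∃ i, a i ≠ 0 ∧ b i ≠ 0
    · obtain ⟨i0, hai, hbi⟩ := hc
      left
      have h1 : (∑ i, a i) = a i0 :=
        Finset.sum_eq_single i0 (fun j _ hj => (ha j i0 hj).resolve_right hai) (by simp)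
      have h2 : (∑ i, b i) = b i0 :=
        Finset.sum_eq_single i0 (fun j _ hj => (hb j i0 hj).resolve_right hbi) (by simp)
      have h3 : (∑ i, a i * b i) = a i0 * b i0 :=
        Finset.sum_eq_single i0
          (fun j _ hj => by rw [(ha j i0 hj).resolve_right hai, zero_mul]) (by simp)
      rw [h1, h2, h3]
    · right
      push_neg at hc
      refine Finset.sum_eq_zero fun i _ => ?_
      by_cases h0 : a i = 0
      · rw [h0, zero_mul]
      · rw [hc i h0, mul_zero]
  have hexp : ∑ i, (a i - b i) ^ 2
      = (∑ i, a i * a i) + (∑ i, b i * b i) - 2 * ∑ i, a i * b i := by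
    have h1 : ∀ i, (a i - b i) ^ 2 = a i * a i + b i * b i - 2 * (a i * b i) :=
      fun i => by ring
    simp_rw [h1, Finset.sum_sub_distrib, Finset.sum_add_distrib, ← Finset.mul_sum]
  rcases hab with h | h <;>
    [nlinarith [hexp, hA, hB, h, sq_nonneg ((∑ i, a i) - (∑ i, b i))];
     nlinarith [hexp, hA, hB, h, sq_nonneg ((∑ i, a i) + (∑ i, b i))]]

private lemma energy_expand (w : Fin n → Fin n → ℝ) (hsym : ∀ u v, w u v = w v u)
    (f : Fin n → ℝ) :
    energy w f = (∑ v, deg w v * f v ^ 2) - ∑ u, ∑ v, w u v * (f u * f v) := by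
  unfold energy
  have h1 : ∀ u : Fin n, ∑ v, w u v * (f u - f v) ^ 2
      = (deg w u * f u ^ 2 + ∑ v, w u v * f v ^ 2) - 2 * ∑ v, w u v * (f u * f v) := by
    intro u
    have h0 : ∀ v : Fin n, w u v * (f u - f v) ^ 2
        = (w u v * f u ^ 2 + w u v * f v ^ 2) - 2 * (w u v * (f u * f v)) :=
      fun v => by ring
    simp_rw [h0, Finset.sum_sub_distrib, Finset.sum_add_distrib, ← Finset.mul_sum]
    rw [← Finset.sum_mul]
    rfl
  simp_rw [h1, Finset.sum_sub_distrib, Finset.sum_add_distrib, ← Finset.mul_sum]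
  have h2 : ∑ u, ∑ v, w u v * f v ^ 2 = ∑ v, deg w v * f v ^ 2 := by
    rw [Finset.sum_comm]
    refine Finset.sum_congr rfl fun v _ => ?_
    rw [← Finset.sum_mul]
    have h3 : ∑ u, w v u = ∑ u, w u v := Finset.sum_congr rfl fun u _ => hsym v u
    rw [deg, h3]
  rw [h2]
  ring

private lemma normWsq_pos (w : Fin n → Fin n → ℝ) (hdeg : ∀ v, 1 ≤ deg w v)
    (f : Fin n → ℝ) (hf : f ≠ 0) : 0 < normWsq w f := by
  obtain ⟨v0, hv0⟩ : ∃ v, f v ≠ 0 := by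
    by_contra h
    push_neg at h
    exact hf (funext h)
  refine Finset.sum_pos' (fun v _ => ?_) ⟨v0, Finset.mem_univ v0, ?_⟩
  · exact mul_nonneg (le_trans zero_le_one (hdeg v)) (sq_nonneg _)
  · exact mul_pos (lt_of_lt_of_le zero_lt_one (hdeg v0)) (pow_two_pos_of_ne_zero hv0)

private lemma sum_orth {N M : ℕ} (e : Fin M → Fin N → ℝ)
    (horth : ∀ i j, ∑ v, e i v * e j v = if i = j then (1 : ℝ) else 0)
    (x y : Fin M → ℝ) :
    ∑ v, (∑ i, x i * e i v) * (∑ j, y j * e j v) = ∑ i, x i * y i := by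
  have h1 : ∀ v, (∑ i, x i * e i v) * (∑ j, y j * e j v)
      = ∑ i, ∑ j, (x i * y j) * (e i v * e j v) := by
    intro v
    rw [Finset.sum_mul_sum]
    exact Finset.sum_congr rfl fun i _ => Finset.sum_congr rfl fun j _ => by ring
  simp_rw [h1]
  rw [Finset.sum_comm]
  refine Finset.sum_congr rfl fun i _ => ?_
  rw [Finset.sum_comm]
  have h3 : ∀ j, ∑ v, (x i * y j) * (e i v * e j v)
      = (x i * y j) * (if i = j then (1 : ℝ) else 0) := by
    intro j
    rw [← horth i j, Finset.mul_sum]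
  simp_rw [h3]
  simp [mul_ite, mul_one, mul_zero]

/-- For `k` disjointly supported nonzero functions,
`λ_k ≤ 2 · max_i R(f_i)`. -/
theorem lam_le_two_max_rayleigh
    (hn : 2 ≤ n) (w : Fin n → Fin n → ℝ)
    (hsym : ∀ u v, w u v = w v u) (hnn : ∀ u v, 0 ≤ w u v)
    (hloop : ∀ v, w v v = 0) (hdeg : ∀ v, 1 ≤ deg w v)
    (hH : (normLap w).IsHermitian)
    (k : ℕ) (hk1 : 1 ≤ k) (hkn : k ≤ n)
    (F : Fin k → Fin n → ℝ) (hF0 : ∀ i, F i ≠ 0)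
    (hdisj : ∀ i j, i ≠ j → ∀ v, F i v = 0 ∨ F j v = 0) :
    sortedEig hH k ≤ 2 * ⨆ i, rayleigh w (F i) := by
  classical
  set M := ⨆ i, rayleigh w (F i) with hMdef
  have hk' : k - 1 < n := by omega
  have hdeg0 : ∀ v, (0:ℝ) ≤ deg w v := fun v => le_trans zero_le_one (hdeg v)
  have hsqpos : ∀ v, (0:ℝ) < Real.sqrt (deg w v) :=
    fun v => Real.sqrt_pos.mpr (lt_of_lt_of_le zero_lt_one (hdeg v))
  have hss : ∀ v, Real.sqrt (deg w v) * Real.sqrt (deg w v) = deg w v :=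
    fun v => Real.mul_self_sqrt (hdeg0 v)
  -- the index embedding
  set m := n - (k - 1) with hmdef
  set emb : Fin m → Fin n := fun j => ⟨k - 1 + j, by have := j.isLt; omega⟩ with hembdef
  have hembv : ∀ j, (emb j : ℕ) = k - 1 + j := fun j => rfl
  have hembinj : Function.Injective emb := by
    intro x y hxy
    have h := congrArg Fin.val hxy
    rw [hembv, hembv] at h
    exact Fin.ext (by omega)
  -- eigenvector functions
  set bf : Fin n → (Fin n → ℝ) := fun i => ⇑(hH.eigenvectorBasis i) with hbfdef
  set eU : Fin m → (Fin n → ℝ) :=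
    fun j => bf (Tuple.sort hH.eigenvalues (emb j)) with heUdef
  have horthb : ∀ i j : Fin n,
      ∑ v, bf i v * bf j v = if i = j then (1:ℝ) else 0 := by
    intro i j
    have h := orthonormal_iff_ite.mp hH.eigenvectorBasis.orthonormal i j
    simp only [hbfdef]
    simpa [PiLp.inner_apply, mul_comm] using h
  have horthU : ∀ i j : Fin m, ∑ v, eU i v * eU j v = if i = j then (1:ℝ) else 0 := by
    intro i j
    simp only [heUdef]
    rw [horthb]
    by_cases h : i = j
    · simp [h]
    · rw [if_neg h, if_neg (fun he => h (hembinj ((Tuple.sort hH.eigenvalues).injective he)))]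
  have hmv : ∀ (x : Fin n → ℝ) (u : Fin n),
      Matrix.mulVec (normLap w) x u = ∑ v, normLap w u v * x v := fun x u => rfl
  have heid : ∀ (j : Fin m) (u : Fin n),
      ∑ v, normLap w u v * eU j v
        = hH.eigenvalues (Tuple.sort hH.eigenvalues (emb j)) * eU j u := by
    intro j u
    have h := hH.mulVec_eigenvectorBasis (Tuple.sort hH.eigenvalues (emb j))
    have h2 := congrFun h u
    simp only [heUdef, hbfdef]
    rw [← hmv]
    simpa using h2
  -- eU is linearly independent
  have heUind : LinearIndependent ℝ eU := by
    rw [Fintype.linearIndependent_iff]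
    intro d hd j
    have h1 : ∀ v, ∑ i, d i * eU i v = 0 := by
      intro v
      have := congrFun hd v
      simpa [Finset.sum_apply] using this
    have h2 : d j = ∑ v, (∑ i, d i * eU i v) * eU j v := by
      calc d j = ∑ i, d i * (if i = j then (1:ℝ) else 0) := by simp
        _ = ∑ i, d i * ∑ v, eU i v * eU j v := by simp_rw [horthU]
        _ = ∑ i, ∑ v, d i * (eU i v * eU j v) := by simp_rw [Finset.mul_sum]
        _ = ∑ v, ∑ i, d i * (eU i v * eU j v) := Finset.sum_comm
        _ = ∑ v, (∑ i, d i * eU i v) * eU j v := by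
            refine Finset.sum_congr rfl fun v _ => ?_
            rw [Finset.sum_mul]
            exact Finset.sum_congr rfl fun i _ => by ring
    rw [h2]
    simp_rw [h1]
    simp
  -- the lifted functions G i = sqrt(deg) * F i
  set G : Fin k → (Fin n → ℝ) := fun i v => Real.sqrt (deg w v) * F i v with hGdef
  have hGind : LinearIndependent ℝ G := by
    rw [Fintype.linearIndependent_iff]
    intro c hc i
    obtain ⟨v, hv⟩ : ∃ v, F i v ≠ 0 := by
      by_contra h; push_neg at h; exact hF0 i (funext h)
    have h0 : ∑ j, c j * (Real.sqrt (deg w v) * F j v) = 0 := by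
      have := congrFun hc v
      simpa [Finset.sum_apply, hGdef] using this
    have hsingle : ∑ j, c j * (Real.sqrt (deg w v) * F j v)
        = c i * (Real.sqrt (deg w v) * F i v) := by
      refine Finset.sum_eq_single i (fun j _ hj => ?_) (by simp)
      rcases hdisj j i hj v with h | h
      · rw [h]; ring
      · exact absurd h hv
    rw [hsingle] at h0
    exact (mul_eq_zero.mp h0).resolve_right (mul_ne_zero (ne_of_gt (hsqpos v)) hv)
  -- dimension counting
  set W := Submodule.span ℝ (Set.range G) with hWdef
  set U := Submodule.span ℝ (Set.range eU) with hUdef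
  have hWrank : Module.finrank ℝ W = k := by
    rw [hWdef, finrank_span_eq_card hGind, Fintype.card_fin]
  have hUrank : Module.finrank ℝ U = m := by
    rw [hUdef, finrank_span_eq_card heUind, Fintype.card_fin]
  have hsum := Submodule.finrank_sup_add_finrank_inf_eq W U
  have hne : W ⊓ U ≠ ⊥ := by
    intro hbot
    rw [hbot, hWrank, hUrank, finrank_bot] at hsum
    have h1 : Module.finrank ℝ ↥(W ⊔ U) ≤ n := by
      have h2 := Submodule.finrank_le (W ⊔ U)
      rwa [Module.finrank_fin_fun ℝ] at h2
    omega
  obtain ⟨g, hgmem, hg0⟩ := Submodule.exists_mem_ne_zero_of_ne_bot hne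
  have hmem1 := (Submodule.mem_inf.mp hgmem).1
  have hmem2 := (Submodule.mem_inf.mp hgmem).2
  rw [hWdef, Submodule.mem_span_range_iff_exists_fun] at hmem1
  rw [hUdef, Submodule.mem_span_range_iff_exists_fun] at hmem2
  obtain ⟨c, hcg⟩ := hmem1
  obtain ⟨d, hdg⟩ := hmem2
  set f : Fin n → ℝ := fun v => ∑ i, c i * F i v with hfdef
  have hfv : ∀ v, f v = ∑ i, c i * F i v := fun v => rfl
  have hgf : ∀ v, g v = Real.sqrt (deg w v) * f v := by
    intro v
    rw [← hcg]
    simp only [Finset.sum_apply, Pi.smul_apply, smul_eq_mul, hGdef, hfv]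
    rw [Finset.mul_sum]
    exact Finset.sum_congr rfl fun i _ => by ring
  have hge : ∀ v, g v = ∑ j, d j * eU j v := by
    intro v
    rw [← hdg]
    simp [Finset.sum_apply]
  -- the two quadratic quantities
  set Q := ∑ u, ∑ v, g u * (normLap w u v * g v) with hQdef
  set Nq := ∑ v, g v * g v with hNdef
  have hQeig : Q = ∑ j, d j * (hH.eigenvalues (Tuple.sort hH.eigenvalues (emb j)) * d j) := by
    rw [hQdef]
    have h1 : ∀ u, ∑ v, normLap w u v * g v
        = ∑ j, (hH.eigenvalues (Tuple.sort hH.eigenvalues (emb j)) * d j) * eU j u := by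
      intro u
      calc ∑ v, normLap w u v * g v
          = ∑ v, ∑ j, d j * (normLap w u v * eU j v) := by
            refine Finset.sum_congr rfl fun v _ => ?_
            rw [hge v, Finset.mul_sum]
            exact Finset.sum_congr rfl fun j _ => by ring
        _ = ∑ j, ∑ v, d j * (normLap w u v * eU j v) := Finset.sum_comm
        _ = ∑ j, (hH.eigenvalues (Tuple.sort hH.eigenvalues (emb j)) * d j) * eU j u := by
            refine Finset.sum_congr rfl fun j _ => ?_
            rw [← Finset.mul_sum, heid j u]
            ring
    calc ∑ u, ∑ v, g u * (normLap w u v * g v)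
        = ∑ u, (∑ i, d i * eU i u)
            * (∑ j, (hH.eigenvalues (Tuple.sort hH.eigenvalues (emb j)) * d j) * eU j u) := by
          refine Finset.sum_congr rfl fun u _ => ?_
          rw [← Finset.mul_sum, h1 u, hge u]
      _ = ∑ j, d j * (hH.eigenvalues (Tuple.sort hH.eigenvalues (emb j)) * d j) :=
          sum_orth eU horthU d _
  have hNeig : Nq = ∑ j, d j * d j := by
    rw [hNdef]
    calc (∑ v, g v * g v) = ∑ v, (∑ i, d i * eU i v) * (∑ j, d j * eU j v) := by
          refine Finset.sum_congr rfl fun v _ => ?_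
          rw [hge v]
      _ = ∑ j, d j * d j := sum_orth eU horthU d d
  -- lower bound by the k-th eigenvalue
  have hse : sortedEig hH k = hH.eigenvalues (Tuple.sort hH.eigenvalues ⟨k - 1, hk'⟩) := by
    unfold sortedEig
    rw [dif_pos hk']
  have hmono := Tuple.monotone_sort hH.eigenvalues
  have hlow : sortedEig hH k * Nq ≤ Q := by
    rw [hQeig, hNeig, hse, Finset.mul_sum]
    refine Finset.sum_le_sum fun j _ => ?_
    have hle : (⟨k - 1, hk'⟩ : Fin n) ≤ emb j := by
      rw [Fin.le_def, hembv j]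
      exact Nat.le_add_right _ _
    have h2 : hH.eigenvalues (Tuple.sort hH.eigenvalues ⟨k - 1, hk'⟩)
        ≤ hH.eigenvalues (Tuple.sort hH.eigenvalues (emb j)) := hmono hle
    have hdd : (0:ℝ) ≤ d j * d j := mul_self_nonneg _
    calc hH.eigenvalues (Tuple.sort hH.eigenvalues ⟨k - 1, hk'⟩) * (d j * d j)
        ≤ hH.eigenvalues (Tuple.sort hH.eigenvalues (emb j)) * (d j * d j) :=
          mul_le_mul_of_nonneg_right h2 hdd
      _ = d j * (hH.eigenvalues (Tuple.sort hH.eigenvalues (emb j)) * d j) := by ring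
  -- identification with energy and norm
  have hNf : Nq = normWsq w f := by
    rw [hNdef]
    unfold normWsq
    refine Finset.sum_congr rfl fun v _ => ?_
    rw [hgf v]
    calc Real.sqrt (deg w v) * f v * (Real.sqrt (deg w v) * f v)
        = (Real.sqrt (deg w v) * Real.sqrt (deg w v)) * f v ^ 2 := by ring
      _ = deg w v * f v ^ 2 := by rw [hss v]
  have hQf : Q = energy w f := by
    rw [energy_expand w hsym f, hQdef]
    have hterm : ∀ u v : Fin n, g u * (normLap w u v * g v)
        = (if u = v then deg w u * f u ^ 2 else 0) - w u v * (f u * f v) := by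
      intro u v
      unfold normLap
      simp only [Matrix.of_apply]
      by_cases h : u = v
      · subst h
        rw [if_pos rfl, if_pos rfl, hloop u]
        rw [zero_div, sub_zero, zero_mul, sub_zero, one_mul, hgf u]
        calc Real.sqrt (deg w u) * f u * (Real.sqrt (deg w u) * f u)
            = (Real.sqrt (deg w u) * Real.sqrt (deg w u)) * f u ^ 2 := by ring
          _ = deg w u * f u ^ 2 := by rw [hss u]
      · rw [if_neg h, if_neg h, hgf u, hgf v]
        have hsu : Real.sqrt (deg w u) ≠ 0 := ne_of_gt (hsqpos u)
        have hsv : Real.sqrt (deg w v) ≠ 0 := ne_of_gt (hsqpos v)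
        field_simp
        ring
    calc ∑ u, ∑ v, g u * (normLap w u v * g v)
        = ∑ u, ∑ v, ((if u = v then deg w u * f u ^ 2 else 0) - w u v * (f u * f v)) :=
          Finset.sum_congr rfl fun u _ => Finset.sum_congr rfl fun v _ => hterm u v
      _ = (∑ v, deg w v * f v ^ 2) - ∑ u, ∑ v, w u v * (f u * f v) := by
          simp_rw [Finset.sum_sub_distrib]
          congr 1
          refine Finset.sum_congr rfl fun u _ => ?_
          simp [Finset.sum_ite_eq]
  -- positivity of the norm
  have hNpos : 0 < Nq := by
    obtain ⟨v0, hv0⟩ : ∃ v, g v ≠ 0 := by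
      by_contra h; push_neg at h; exact hg0 (funext h)
    rw [hNdef]
    exact Finset.sum_pos' (fun v _ => mul_self_nonneg _)
      ⟨v0, Finset.mem_univ _, mul_self_pos.mpr hv0⟩
  -- Rayleigh quotient bounds
  have hMub : ∀ i, rayleigh w (F i) ≤ M := by
    intro i
    rw [hMdef]
    exact le_ciSup (f := fun i => rayleigh w (F i)) (Set.Finite.bddAbove (Set.finite_range _)) i
  have hposFi : ∀ i, 0 < normWsq w (F i) := fun i => normWsq_pos w hdeg (F i) (hF0 i)
  have hEi : ∀ i, energy w (F i) ≤ M * normWsq w (F i) := by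
    intro i
    have h1 : energy w (F i) = rayleigh w (F i) * normWsq w (F i) := by
      unfold rayleigh
      rw [div_mul_cancel₀]
      exact ne_of_gt (hposFi i)
    rw [h1]
    exact mul_le_mul_of_nonneg_right (hMub i) (le_of_lt (hposFi i))
  have hNsplit : normWsq w f = ∑ i, c i ^ 2 * normWsq w (F i) := by
    unfold normWsq
    have hpt : ∀ v, deg w v * f v ^ 2 = ∑ i, c i ^ 2 * (deg w v * F i v ^ 2) := by
      intro v
      have hsq : f v * f v = ∑ i, (c i * F i v) * (c i * F i v) := by
        rw [hfv v]
        exact sum_mul_sum_eq _ _ (fun i j hij => (hdisj i j hij v).imp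
          (fun h => by simp [h]) (fun h => by simp [h]))
      calc deg w v * f v ^ 2 = deg w v * (f v * f v) := by ring
        _ = deg w v * ∑ i, (c i * F i v) * (c i * F i v) := by rw [hsq]
        _ = ∑ i, c i ^ 2 * (deg w v * F i v ^ 2) := by
            rw [Finset.mul_sum]
            exact Finset.sum_congr rfl fun i _ => by ring
    simp_rw [hpt]
    rw [Finset.sum_comm]
    refine Finset.sum_congr rfl fun i _ => ?_
    rw [Finset.mul_sum]
  have hEf : energy w f ≤ 2 * M * normWsq w f := by
    have hpt : ∀ u v, w u v * (f u - f v) ^ 2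
        ≤ ∑ i, c i ^ 2 * (2 * (w u v * (F i u - F i v) ^ 2)) := by
      intro u v
      have hkey := key_ineq (fun i => c i * F i u) (fun i => c i * F i v)
        (fun i j hij => (hdisj i j hij u).imp
          (fun h => by simp [h]) (fun h => by simp [h]))
        (fun i j hij => (hdisj i j hij v).imp
          (fun h => by simp [h]) (fun h => by simp [h]))
      have h2 : ∑ i, c i ^ 2 * (2 * (w u v * (F i u - F i v) ^ 2))
          = w u v * (2 * ∑ i, (c i * F i u - c i * F i v) ^ 2) := by
        simp_rw [Finset.mul_sum]
        exact Finset.sum_congr rfl fun i _ => by ring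
      rw [h2]
      refine mul_le_mul_of_nonneg_left ?_ (hnn u v)
      rw [hfv u, hfv v]
      exact hkey
    have hsw : ∑ u, ∑ v, ∑ i, c i ^ 2 * (2 * (w u v * (F i u - F i v) ^ 2))
        = ∑ i, ∑ u, ∑ v, c i ^ 2 * (2 * (w u v * (F i u - F i v) ^ 2)) := by
      calc ∑ u, ∑ v, ∑ i, c i ^ 2 * (2 * (w u v * (F i u - F i v) ^ 2))
          = ∑ u, ∑ i, ∑ v, c i ^ 2 * (2 * (w u v * (F i u - F i v) ^ 2)) :=
            Finset.sum_congr rfl fun u _ => Finset.sum_comm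
        _ = ∑ i, ∑ u, ∑ v, c i ^ 2 * (2 * (w u v * (F i u - F i v) ^ 2)) :=
            Finset.sum_comm
    calc energy w f = (1 / 2 : ℝ) * ∑ u, ∑ v, w u v * (f u - f v) ^ 2 := rfl
      _ ≤ (1 / 2 : ℝ) * ∑ u, ∑ v, ∑ i, c i ^ 2 * (2 * (w u v * (F i u - F i v) ^ 2)) := by
          refine mul_le_mul_of_nonneg_left ?_ (by norm_num)
          exact Finset.sum_le_sum fun u _ => Finset.sum_le_sum fun v _ => hpt u v
      _ = ∑ i, c i ^ 2 * (2 * energy w (F i)) := by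
          rw [hsw, Finset.mul_sum]
          refine Finset.sum_congr rfl fun i _ => ?_
          calc (1 / 2 : ℝ) * ∑ u, ∑ v, c i ^ 2 * (2 * (w u v * (F i u - F i v) ^ 2))
              = (1 / 2 : ℝ) * ∑ u, ∑ v, (2 * c i ^ 2) * (w u v * (F i u - F i v) ^ 2) := by
                congr 1
                exact Finset.sum_congr rfl fun u _ =>
                  Finset.sum_congr rfl fun v _ => by ring
            _ = (1 / 2 : ℝ) * ((2 * c i ^ 2) * ∑ u, ∑ v, w u v * (F i u - F i v) ^ 2) := by
                simp_rw [← Finset.mul_sum]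
            _ = c i ^ 2 * (2 * energy w (F i)) := by
                unfold energy
                ring
      _ ≤ ∑ i, c i ^ 2 * (2 * (M * normWsq w (F i))) := by
          refine Finset.sum_le_sum fun i _ => ?_
          refine mul_le_mul_of_nonneg_left ?_ (sq_nonneg _)
          exact mul_le_mul_of_nonneg_left (hEi i) (by norm_num)
      _ = 2 * M * ∑ i, c i ^ 2 * normWsq w (F i) := by
          rw [Finset.mul_sum]
          exact Finset.sum_congr rfl fun i _ => by ring
      _ = 2 * M * normWsq w f := by rw [hNsplit]
  -- combine everything
  have hfinal : sortedEig hH k * Nq ≤ (2 * M) * Nq := by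
    calc sortedEig hH k * Nq ≤ Q := hlow
      _ = energy w f := hQf
      _ ≤ 2 * M * normWsq w f := hEf
      _ = (2 * M) * Nq := by rw [hNf]
  exact (mul_le_mul_iff_left₀ hNpos).mp hfinal


end

end CheegerHigher
end
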